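/- Let (D,⊢,⊣) be a g-digroup. Then (D,⊢) is a right group, i.e. for all a, b ∈ D there is a unique x ∈ D with a ⊢ x = b, and (D,⊣) is a left group, i.e. for all a, b ∈ D there is a unique y ∈ D with y ⊣ a = b. -/
import Mathlib


/-- An element `e` is a *bar-unit* for the pair of operations `(⊢, ⊣)` if
`e ⊢ a = a = a ⊣ e` for all `a`. -/
def IsBarUnit {D : Type*} (vd dv : D → D → D) (e : D) : Prop :=
  ∀ a : D, vd e a = a ∧ dv a e = a

/-- A generalized digroup (g-digroup): two associative operations `vd` (`⊢`) and `dv` (`⊣`)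
satisfying inner associativity and the two bar-side irrelevance laws, admitting at least one
bar-unit, and such that for every element `a` and every bar-unit `e` there is a unique pair
`(I e a, J e a)` with `(I e a) ⊣ a = e = a ⊢ (J e a)`. -/
structure GDigroup (D : Type*) where
  vd : D → D → D
  dv : D → D → D
  vd_assoc : ∀ a b c : D, vd (vd a b) c = vd a (vd b c)
  dv_assoc : ∀ a b c : D, dv (dv a b) c = dv a (dv b c)
  inner_assoc : ∀ a b c : D, dv (vd a b) c = vd a (dv b c)
  bar_right : ∀ a b c : D, dv a (vd b c) = dv a (dv b c)
  bar_left : ∀ a b c : D, vd (vd a b) c = vd (dv a b) c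
  exists_barUnit : ∃ e : D, IsBarUnit vd dv e
  I : D → D → D
  J : D → D → D
  I_spec : ∀ e a : D, IsBarUnit vd dv e → dv (I e a) a = e
  J_spec : ∀ e a : D, IsBarUnit vd dv e → vd a (J e a) = e
  I_unique : ∀ e a x : D, IsBarUnit vd dv e → dv x a = e → x = I e a
  J_unique : ∀ e a y : D, IsBarUnit vd dv e → vd a y = e → y = J e a

/-- If `(D, ⊢, ⊣)` is a g-digroup, then `(D, ⊢)` is a right group
(for all `a b` there is a unique `x` with `a ⊢ x = b`) and `(D, ⊣)` is a left group
(for all `a b` there is a unique `y` with `y ⊣ a = b`). -/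
theorem gdigroup_right_group_left_group {D : Type*} (S : GDigroup D) :
    (∀ a b : D, ∃! x : D, S.vd a x = b) ∧ (∀ a b : D, ∃! y : D, S.dv y a = b) := by
  obtain ⟨e, he⟩ := S.exists_barUnit
  have hI := S.I_spec e
  have hJ := S.J_spec e
  have cancel_vd : ∀ a x : D, S.vd (S.I e a) (S.vd a x) = x := by
    intro a x
    rw [← S.vd_assoc, S.bar_left, hI a he]
    exact (he x).1
  have cancel_dv : ∀ a y : D, S.dv (S.dv y a) (S.J e a) = y := by
    intro a y
    rw [S.dv_assoc, ← S.bar_right, hJ a he]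
    exact (he y).2
  constructor
  · intro a b
    have hw : S.vd a (S.vd (S.J e a) b) = b := by
      rw [← S.vd_assoc, hJ a he]; exact (he b).1
    refine ⟨S.vd (S.J e a) b, hw, ?_⟩
    intro x hx
    have h1 := cancel_vd a x
    have h2 := cancel_vd a (S.vd (S.J e a) b)
    rw [hx] at h1
    rw [hw] at h2
    rw [← h1, ← h2]
  · intro a b
    have hw : S.dv (S.dv b (S.I e a)) a = b := by
      rw [S.dv_assoc, hI a he]; exact (he b).2
    refine ⟨S.dv b (S.I e a), hw, ?_⟩
    intro y hy
    have h1 := cancel_dv a y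
    have h2 := cancel_dv a (S.dv b (S.I e a))
    rw [hy] at h1
    rw [hw] at h2
    rw [← h1, ← h2]
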